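/- There exists a deterministic finite automaton D (over alphabet Σ ∪ {$}) with O(|v|·(|u|+|v|)) states recognizing exactly the language { u' $ v' : u' ∈ Σ*, v' ∈ Σ⁺, u' v'^ω = u v^ω }, i.e., all decompositions of the fixed ultimately periodic word u v^ω. -/

import Mathlib

/-- Prepend a finite word to an infinite word. -/
def prependW {α : Type} (u : List α) (w : ℕ → α) : ℕ → α :=
  fun i => if h : i < u.length then u.get ⟨i, h⟩ else w (i - u.length)

/-- The periodic infinite word `v^ω` (arbitrary when `v = []`). -/
def periodW {α : Type} [Inhabited α] (v : List α) : ℕ → α :=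
  fun i => v.getD (i % v.length) default

/-- The ultimately periodic word `u · v^ω`. -/
def upw {α : Type} [Inhabited α] (u v : List α) : ℕ → α :=
  prependW u (periodW v)

/-- The ultimately periodic words of an ω-language. -/
def UP {α : Type} [Inhabited α] (L : Set (ℕ → α)) : Set (ℕ → α) :=
  { w | ∃ u v : List α, v ≠ [] ∧ w = upw u v ∧ w ∈ L }

/-- `v^k` : `k`-fold repetition of the finite word `v`. -/
def rep {α : Type} (v : List α) (k : ℕ) : List α :=
  (List.replicate k v).flatten

set_option linter.unusedSectionVars false
set_option linter.unusedVariables false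
set_option linter.unnecessarySeqFocus false

namespace S10

section periods
variable {α : Type} [Inhabited α]

def HasPer (w : ℕ → α) (n p : ℕ) : Prop := ∀ i, n ≤ i → w (i + p) = w i

lemma hasPer_mono {w : ℕ → α} {n n' p : ℕ} (h : HasPer w n p) (hn : n ≤ n') :
    HasPer w n' p := fun i hi => h i (hn.trans hi)

lemma hasPer_mul {w : ℕ → α} {n p : ℕ} (h : HasPer w n p) (k : ℕ) :
    HasPer w n (k * p) := by
  induction k with
  | zero => intro i _; simp
  | succ k ih =>
    intro i hi
    have h1 : w (i + k * p + p) = w (i + k * p) := h _ (le_trans hi (Nat.le_add_right _ _))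
    have h2 := ih i hi
    calc w (i + (k+1) * p) = w (i + k * p + p) := by ring_nf
    _ = w i := by rw [h1, h2]

lemma hasPer_sub {w : ℕ → α} {n a b : ℕ} (ha : HasPer w n a) (hb : HasPer w n b)
    (hba : b ≤ a) : HasPer w n (a - b) := by
  intro i hi
  have h1 : w (i + (a - b) + b) = w (i + (a - b)) := hb _ (le_trans hi (Nat.le_add_right _ _))
  have h2 : i + (a - b) + b = i + a := by omega
  rw [h2] at h1
  rw [← h1, ha i hi]

lemma hasPer_mod {w : ℕ → α} {n a b : ℕ} (ha : HasPer w n a) (hb : HasPer w n b) :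
    HasPer w n (a % b) := by
  have h := hasPer_sub ha (hasPer_mul hb (a / b)) (Nat.div_mul_le_self a b)
  have hd := Nat.mod_add_div' a b
  have : a % b = a - a / b * b := by omega
  rwa [this]

lemma hasPer_gcd {w : ℕ → α} {n : ℕ} : ∀ {a b : ℕ}, HasPer w n a → HasPer w n b →
    HasPer w n (Nat.gcd a b) := by
  intro a
  induction a using Nat.strong_induction_on with
  | _ a ih =>
    intro b ha hb
    rcases Nat.eq_zero_or_pos a with h0 | h0
    · subst h0; simpa [Nat.gcd_zero_left] using hb
    · rw [Nat.gcd_rec]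
      exact ih (b % a) (Nat.mod_lt _ h0) (hasPer_mod hb ha) ha

lemma hasPer_add_mod {w : ℕ → α} {n p : ℕ} (hp : 0 < p) (h : HasPer w n p) (k : ℕ) :
    w (n + k) = w (n + k % p) := by
  induction k using Nat.strong_induction_on with
  | _ k ih =>
    rcases lt_or_ge k p with hk | hk
    · rw [Nat.mod_eq_of_lt hk]
    · have h1 : w (n + k) = w (n + (k - p)) := by
        have := h (n + (k - p)) (Nat.le_add_right _ _)
        have e : n + (k - p) + p = n + k := by omega
        rw [e] at this; exact this
      rw [h1, ih (k - p) (by omega), Nat.mod_eq_sub_mod hk]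

lemma hasPer_anywhere {w : ℕ → α} {a p m q : ℕ} (hp : 0 < p) (hpa : HasPer w a p)
    (hmq : HasPer w m q) : HasPer w a q := by
  intro i hi
  have hk : m ≤ i + m * p := by
    have : m ≤ m * p := Nat.le_mul_of_pos_right m hp
    omega
  calc w (i + q) = w (i + q + m * p) := (hasPer_mul hpa m (i + q) (by omega)).symm
  _ = w (i + m * p + q) := by ring_nf
  _ = w (i + m * p) := hmq _ hk
  _ = w i := hasPer_mul hpa m i hi

lemma upw_per (u v : List α) : HasPer (upw u v) u.length v.length := by
  intro i hi
  simp only [upw, prependW, periodW]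
  rw [dif_neg (by omega), dif_neg (by omega)]
  congr 1
  rw [show i + v.length - u.length = (i - u.length) + v.length from by omega,
    Nat.add_mod_right]

lemma upw_prefix (u v : List α) {i : ℕ} (h : i < u.length) :
    upw u v i = u.getD i default := by
  simp only [upw, prependW, dif_pos h]
  rw [List.getD_eq_getElem u default h]
  rfl

lemma upw_tail (u v : List α) {i : ℕ} (h : u.length ≤ i) :
    upw u v i = v.getD ((i - u.length) % v.length) default := by
  simp only [upw, prependW, periodW, dif_neg (by omega : ¬ i < u.length)]

/-- Characterization of the decompositions of `u v^ω` in terms of the minimal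
eventual period `q₀` and the minimal preperiod `n₀`. -/
lemma decomp_iff (u v : List α) (hv : v ≠ [])
    {q₀ n₀ : ℕ} (hq : 0 < q₀)
    (hn : HasPer (upw u v) n₀ q₀)
    (hq_min : ∀ p, 0 < p → (∃ n, HasPer (upw u v) n p) → q₀ ≤ p)
    (hn_min : ∀ n, HasPer (upw u v) n q₀ → n₀ ≤ n)
    (u' v' : List α) (hv' : v' ≠ []) :
    upw u' v' = upw u v ↔
      (∀ i < u'.length, u'.getD i default = (upw u v) i) ∧ n₀ ≤ u'.length ∧
      (∀ i < v'.length, v'.getD i default = (upw u v) (u'.length + i)) ∧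
      q₀ ∣ v'.length := by
  set w := upw u v with hw
  have hv'pos : 0 < v'.length := List.length_pos_iff.mpr hv'
  constructor
  · intro h
    have hper' : HasPer w u'.length v'.length := by
      rw [← h]; exact upw_per u' v'
    have hq_dvd : q₀ ∣ v'.length := by
      have h1 : HasPer w (max u'.length n₀) v'.length := hasPer_mono hper' (le_max_left _ _)
      have h2 : HasPer w (max u'.length n₀) q₀ := hasPer_mono hn (le_max_right _ _)
      have hg : HasPer w (max u'.length n₀) (Nat.gcd v'.length q₀) := hasPer_gcd h1 h2
      have hgpos : 0 < Nat.gcd v'.length q₀ := Nat.gcd_pos_of_pos_right _ hq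
      have hle : q₀ ≤ Nat.gcd v'.length q₀ := hq_min _ hgpos ⟨_, hg⟩
      have hle2 : Nat.gcd v'.length q₀ ≤ q₀ := Nat.le_of_dvd hq (Nat.gcd_dvd_right _ _)
      have : Nat.gcd v'.length q₀ = q₀ := le_antisymm hle2 hle
      rw [← this]
      exact Nat.gcd_dvd_left _ _
    refine ⟨?_, ?_, ?_, hq_dvd⟩
    · intro i hi
      rw [← h, upw_prefix u' v' hi]
    · exact hn_min _ (hasPer_anywhere hv'pos hper' hn)
    · intro i hi
      rw [← h, upw_tail u' v' (Nat.le_add_right _ _), Nat.add_sub_cancel_left,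
        Nat.mod_eq_of_lt hi]
  · rintro ⟨hpre, hge, hfac, hdvd⟩
    have hper' : HasPer w u'.length v'.length := by
      obtain ⟨k, hk⟩ := hdvd
      rw [hk, Nat.mul_comm]
      exact hasPer_mul (hasPer_mono hn hge) k
    funext i
    rcases lt_or_ge i u'.length with hi | hi
    · rw [upw_prefix u' v' hi, hpre i hi]
    · rw [upw_tail u' v' hi]
      have h1 := hfac ((i - u'.length) % v'.length) (Nat.mod_lt _ hv'pos)
      rw [h1, ← hasPer_add_mod hv'pos hper' (i - u'.length),
        Nat.add_sub_cancel' hi]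

end periods

section lists
variable {α : Type}

lemma no_none_shape : ∀ (x : List (Option α)), none ∉ x → ∃ x' : List α, x = x'.map some
  | [], _ => ⟨[], rfl⟩
  | (o :: x), h => by
    cases o with
    | none => simp at h
    | some a =>
      obtain ⟨x', hx'⟩ := no_none_shape x (fun hc => h (List.mem_cons_of_mem _ hc))
      exact ⟨a :: x', by simp [hx']⟩

lemma split_first_none : ∀ (x : List (Option α)), none ∈ x →
    ∃ s t, x = s ++ none :: t ∧ none ∉ s
  | [], h => by simp at h
  | (o :: x), h => by
    cases o with
    | none => exact ⟨[], x, rfl, by simp⟩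
    | some a =>
      have hx : none ∈ x := by
        rcases List.mem_cons.mp h with h1 | h1
        · cases h1
        · exact h1
      obtain ⟨s, t, h1, h2⟩ := split_first_none x hx
      exact ⟨some a :: s, t, by simp [h1], by simp [h2]⟩

lemma uniq_split : ∀ (s s' t t' : List (Option α)), s ++ none :: t = s' ++ none :: t' →
    none ∉ s → none ∉ s' → s = s' ∧ t = t'
  | [], [], t, t', h, _, _ => by simpa using h
  | [], (o' :: s'), t, t', h, _, h2 => by
    simp only [List.nil_append, List.cons_append, List.cons.injEq] at h
    exact absurd (h.1 ▸ List.mem_cons_self) h2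
  | (o :: s), [], t, t', h, h1, _ => by
    simp only [List.nil_append, List.cons_append, List.cons.injEq] at h
    exact absurd (h.1.symm ▸ List.mem_cons_self) h1
  | (o :: s), (o' :: s'), t, t', h, h1, h2 => by
    simp only [List.cons_append, List.cons.injEq] at h
    obtain ⟨rfl, h⟩ := h
    obtain ⟨rfl, rfl⟩ := uniq_split s s' t t' h
      (fun hc => h1 (List.mem_cons_of_mem _ hc))
      (fun hc => h2 (List.mem_cons_of_mem _ hc))
    exact ⟨rfl, rfl⟩

end lists

section dfa
variable {α : Type} [DecidableEq α] [Inhabited α]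

def cp (n₀ q₀ n : ℕ) : ℕ := if n < n₀ then n else n₀ + (n - n₀) % q₀

lemma cp_lt {n₀ q₀ : ℕ} (hq : 0 < q₀) (n : ℕ) : cp n₀ q₀ n < n₀ + q₀ := by
  unfold cp; split
  · omega
  · have := Nat.mod_lt (n - n₀) hq; omega

lemma succ_mod (q m : ℕ) : (m + 1) % q = (m % q + 1) % q :=
  ((Nat.mod_modEq m q).add_right 1).symm

lemma cp_succ {n₀ q₀ : ℕ} (hq : 0 < q₀) (n : ℕ) :
    cp n₀ q₀ (n + 1) = if cp n₀ q₀ n + 1 = n₀ + q₀ then n₀ else cp n₀ q₀ n + 1 := by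
  unfold cp
  rcases lt_trichotomy (n+1) n₀ with h | h | h
  · simp only [if_pos h, if_pos (by omega : n < n₀)]
    split <;> omega
  · simp only [if_neg (by omega : ¬ n + 1 < n₀), if_pos (by omega : n < n₀)]
    have e : n + 1 - n₀ = 0 := by omega
    rw [e, Nat.zero_mod]
    split <;> omega
  · have hn : ¬ n < n₀ := by omega
    simp only [if_neg (by omega : ¬ n + 1 < n₀), if_neg hn]
    have e1 : n + 1 - n₀ = (n - n₀) + 1 := by omega
    rw [e1, succ_mod]
    have hr := Nat.mod_lt (n - n₀) hq
    rcases Nat.lt_or_ge ((n - n₀) % q₀ + 1) q₀ with h2 | h2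
    · rw [Nat.mod_eq_of_lt h2]
      split <;> omega
    · have e2 : (n - n₀) % q₀ + 1 = q₀ := by omega
      rw [e2, Nat.mod_self]
      split <;> omega

lemma cp_of_ge {n₀ q₀ n : ℕ} (h : n₀ ≤ n) : cp n₀ q₀ n = n₀ + (n - n₀) % q₀ :=
  if_neg (by omega)

lemma cp_ge_iff {n₀ q₀ n : ℕ} : n₀ ≤ cp n₀ q₀ n ↔ n₀ ≤ n := by
  unfold cp; split <;> omega

lemma cp_zero {n₀ q₀ : ℕ} : cp n₀ q₀ 0 = 0 := by
  unfold cp; split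
  · rfl
  · simp; omega

lemma w_cp {w : ℕ → α} {n₀ q₀ : ℕ} (hq : 0 < q₀) (hper : HasPer w n₀ q₀) (n : ℕ) :
    w (cp n₀ q₀ n) = w n := by
  unfold cp; split
  · rfl
  · exact (hasPer_add_mod hq hper (n - n₀)).symm.trans
      (by rw [Nat.add_sub_cancel' (by omega)])

abbrev St (n₀ q₀ : ℕ) : Type := Option (Fin (n₀ + q₀) ⊕ Fin q₀ × Fin q₀ × Bool)

/-- The DFA recognizing the decompositions of `w`, where `q₀` is the minimal
eventual period and `n₀` the minimal preperiod of `w`. -/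
def M (w : ℕ → α) (n₀ q₀ : ℕ) (hq : 0 < q₀) : DFA (Option α) (St n₀ q₀) where
  step s o :=
    match s, o with
    | none, _ => none
    | some (Sum.inl m), some a =>
        if a = w m.val then
          some (Sum.inl ⟨if m.val + 1 = n₀ + q₀ then n₀ else m.val + 1,
            by have := m.isLt; split <;> omega⟩)
        else none
    | some (Sum.inl m), none =>
        if h : n₀ ≤ m.val then
          some (Sum.inr (⟨m.val - n₀, by have := m.isLt; omega⟩,
            ⟨m.val - n₀, by have := m.isLt; omega⟩, false))
        else none
    | some (Sum.inr (r₀, cur, _)), some a =>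
        if a = w (n₀ + cur.val) then
          some (Sum.inr (r₀, ⟨(cur.val + 1) % q₀, Nat.mod_lt _ hq⟩, true))
        else none
    | some (Sum.inr _), none => none
  start := some (Sum.inl ⟨0, by omega⟩)
  accept := { s | ∃ r : Fin q₀, s = some (Sum.inr (r, r, true)) }

lemma card_St (n₀ q₀ : ℕ) : Fintype.card (St n₀ q₀) = (n₀ + q₀) + q₀ * q₀ * 2 + 1 := by
  simp [St]; ring

variable {w : ℕ → α} {n₀ q₀ : ℕ} (hq : 0 < q₀)

lemma eval_dead (t : List (Option α)) : (M w n₀ q₀ hq).evalFrom none t = none := by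
  induction t with
  | nil => rfl
  | cons o t ih => exact ih

lemma eval1 (hper : HasPer w n₀ q₀) (x : List α) : ∀ n : ℕ,
    (M w n₀ q₀ hq).evalFrom (some (Sum.inl ⟨cp n₀ q₀ n, cp_lt hq n⟩)) (x.map some) =
    if ∀ i < x.length, x.getD i default = w (n + i) then
      some (Sum.inl ⟨cp n₀ q₀ (n + x.length), cp_lt hq _⟩) else none := by
  classical
  induction x with
  | nil => intro n; simp [DFA.evalFrom]
  | cons a x ih =>
    intro n
    have hstep : (M w n₀ q₀ hq).evalFrom (some (Sum.inl ⟨cp n₀ q₀ n, cp_lt hq n⟩))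
        ((a :: x).map some) =
        (M w n₀ q₀ hq).evalFrom
          ((M w n₀ q₀ hq).step (some (Sum.inl ⟨cp n₀ q₀ n, cp_lt hq n⟩)) (some a))
          (x.map some) := rfl
    rw [hstep]
    by_cases ha : a = w n
    · have ha' : a = w (cp n₀ q₀ n) := by rw [w_cp hq hper]; exact ha
      have hstep2 : (M w n₀ q₀ hq).step (some (Sum.inl ⟨cp n₀ q₀ n, cp_lt hq n⟩)) (some a)
          = some (Sum.inl ⟨cp n₀ q₀ (n+1), cp_lt hq _⟩) := by
        simp only [M, if_pos ha']
        congr 1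
        apply congrArg
        apply Fin.ext
        simp [cp_succ hq n]
      rw [hstep2, ih (n+1)]
      by_cases hx : ∀ i < x.length, x.getD i default = w (n + 1 + i)
      · have e : n + 1 + x.length = n + (a :: x).length := by
          simp only [List.length_cons]; omega
        rw [if_pos hx, if_pos]
        · rw [← e]
        · intro i hi
          cases i with
          | zero => simpa using ha
          | succ j =>
            simp only [List.getD_cons_succ]
            have := hx j (by simpa using hi)
            rw [this]; congr 1; omega
      · rw [if_neg hx, if_neg]
        intro hcon
        apply hx
        intro i hi
        have := hcon (i+1) (by simpa using hi)
        simp only [List.getD_cons_succ] at this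
        rw [this]; congr 1; omega
    · have ha' : ¬ a = w (cp n₀ q₀ n) := by rw [w_cp hq hper]; exact ha
      have hstep2 : (M w n₀ q₀ hq).step (some (Sum.inl ⟨cp n₀ q₀ n, cp_lt hq n⟩)) (some a)
          = none := by simp only [M, if_neg ha']
      rw [hstep2, eval_dead, if_neg]
      intro hcon
      exact ha (by simpa using hcon 0 (by simp))

lemma mod_add_mod' (m i q : ℕ) : (m % q + i) % q = (m + i) % q :=
  ((Nat.mod_modEq m q).add_right i)

lemma mem_accept_iff (s : St n₀ q₀) :
    s ∈ (M w n₀ q₀ hq).accept ↔ ∃ r : Fin q₀, s = some (Sum.inr (r, r, true)) := Iff.rfl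

lemma eval2 (t : List (Option α)) : ∀ (r₀ cur : Fin q₀) (b : Bool),
    ((M w n₀ q₀ hq).evalFrom (some (Sum.inr (r₀, cur, b))) t ∈ (M w n₀ q₀ hq).accept) ↔
    ∃ v' : List α, t = v'.map some ∧
      (∀ i < v'.length, v'.getD i default = w (n₀ + (cur.val + i) % q₀)) ∧
      (cur.val + v'.length) % q₀ = r₀.val ∧ (b = true ∨ v' ≠ []) := by
  induction t with
  | nil =>
    intro r₀ cur b
    simp only [DFA.evalFrom, List.foldl_nil, mem_accept_iff]
    constructor
    · rintro ⟨r, hr⟩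
      refine ⟨[], rfl, by simp, ?_, ?_⟩
      · simp only [Option.some.injEq, Sum.inr.injEq, Prod.mk.injEq] at hr
        rw [List.length_nil, Nat.add_zero, Nat.mod_eq_of_lt cur.isLt, hr.1, hr.2.1]
      · simp only [Option.some.injEq, Sum.inr.injEq, Prod.mk.injEq] at hr
        exact Or.inl hr.2.2
    · rintro ⟨v', hv', _, hfin, hb⟩
      have hv0 : v' = [] := by
        cases v' with
        | nil => rfl
        | cons a l => simp at hv'
      subst hv0
      rw [List.length_nil, Nat.add_zero, Nat.mod_eq_of_lt cur.isLt] at hfin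
      have hb' : b = true := by tauto
      refine ⟨cur, ?_⟩
      rw [hb', Fin.ext hfin]
  | cons o t ih =>
    intro r₀ cur b
    cases o with
    | none =>
      have hstep : (M w n₀ q₀ hq).evalFrom (some (Sum.inr (r₀, cur, b))) (none :: t)
          = (M w n₀ q₀ hq).evalFrom none t := rfl
      rw [hstep, eval_dead]
      simp only [mem_accept_iff]
      constructor
      · rintro ⟨r, hr⟩; cases hr
      · rintro ⟨v', hv', -⟩
        exfalso
        cases v' with
        | nil => simp at hv'
        | cons a l => simp at hv'
    | some a =>
      by_cases ha : a = w (n₀ + cur.val)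
      · have hstep : (M w n₀ q₀ hq).evalFrom (some (Sum.inr (r₀, cur, b))) (some a :: t)
            = (M w n₀ q₀ hq).evalFrom
              (some (Sum.inr (r₀, ⟨(cur.val + 1) % q₀, Nat.mod_lt _ hq⟩, true))) t := by
          show (M w n₀ q₀ hq).evalFrom
            ((M w n₀ q₀ hq).step (some (Sum.inr (r₀, cur, b))) (some a)) t = _
          rw [show (M w n₀ q₀ hq).step (some (Sum.inr (r₀, cur, b))) (some a)
            = some (Sum.inr (r₀, ⟨(cur.val + 1) % q₀, Nat.mod_lt _ hq⟩, true)) from by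
              simp only [M, if_pos ha]]
        rw [hstep, ih]
        constructor
        · rintro ⟨v'', ht, hchar, hfin, -⟩
          refine ⟨a :: v'', by simp [ht], ?_, ?_, Or.inr (by simp)⟩
          · intro i hi
            cases i with
            | zero =>
              simpa [Nat.mod_eq_of_lt cur.isLt] using ha
            | succ j =>
              have := hchar j (by simpa using hi)
              simp only [List.getD_cons_succ]
              rw [this, mod_add_mod',
                show (cur:ℕ) + 1 + j = (cur:ℕ) + (j+1) from by omega]
          · rw [List.length_cons, ← hfin, mod_add_mod',
              show (cur:ℕ) + 1 + v''.length = (cur:ℕ) + (v''.length + 1) from by omega]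
        · rintro ⟨v', ht, hchar, hfin, -⟩
          cases v' with
          | nil => simp at ht
          | cons a' v'' =>
            simp only [List.map_cons, List.cons.injEq, Option.some.injEq] at ht
            obtain ⟨rfl, ht⟩ := ht
            refine ⟨v'', ht, ?_, ?_, Or.inl rfl⟩
            · intro i hi
              have := hchar (i+1) (by simp; omega)
              simp only [List.getD_cons_succ] at this
              rw [this, mod_add_mod',
                show (cur:ℕ) + (i+1) = (cur:ℕ) + 1 + i from by omega]
            · rw [← hfin, List.length_cons, mod_add_mod',
                show (cur:ℕ) + 1 + v''.length = (cur:ℕ) + (v''.length + 1) from by omega]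
      · have hstep : (M w n₀ q₀ hq).evalFrom (some (Sum.inr (r₀, cur, b))) (some a :: t)
            = (M w n₀ q₀ hq).evalFrom none t := by
          show (M w n₀ q₀ hq).evalFrom
            ((M w n₀ q₀ hq).step (some (Sum.inr (r₀, cur, b))) (some a)) t = _
          rw [show (M w n₀ q₀ hq).step (some (Sum.inr (r₀, cur, b))) (some a) = none from by
            simp only [M, if_neg ha]]
        rw [hstep, eval_dead]
        simp only [mem_accept_iff]
        constructor
        · rintro ⟨r, hr⟩; cases hr
        · rintro ⟨v', ht, hchar, -⟩
          exfalso
          cases v' with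
          | nil => simp at ht
          | cons a' v'' =>
            simp only [List.map_cons, List.cons.injEq, Option.some.injEq] at ht
            apply ha
            have := hchar 0 (by simp)
            rw [← ht.1] at this
            simpa [Nat.mod_eq_of_lt cur.isLt] using this

lemma mod_self_add_iff {r L q : ℕ} (hr : r < q) : (r + L) % q = r ↔ q ∣ L := by
  constructor
  · intro h
    have : (r + L) ≡ r [MOD q] := by
      unfold Nat.ModEq
      rw [h, Nat.mod_eq_of_lt hr]
    have := (Nat.modEq_iff_dvd' (Nat.le_add_right r L)).mp this.symm
    simpa using this
  · rintro ⟨k, rfl⟩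
    rw [Nat.add_mul_mod_self_left, Nat.mod_eq_of_lt hr]

lemma start_eq : (M w n₀ q₀ hq).start = some (Sum.inl ⟨cp n₀ q₀ 0, cp_lt hq 0⟩) := by
  simp only [M]
  congr 1
  apply congrArg
  apply Fin.ext
  simp [cp_zero]

lemma evalFrom_append (s : St n₀ q₀) (x y : List (Option α)) :
    (M w n₀ q₀ hq).evalFrom s (x ++ y)
      = (M w n₀ q₀ hq).evalFrom ((M w n₀ q₀ hq).evalFrom s x) y := by
  simp [DFA.evalFrom, List.foldl_append]

lemma accepts_iff (hper : HasPer w n₀ q₀) (x : List (Option α)) :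
    x ∈ (M w n₀ q₀ hq).accepts ↔
    ∃ u' v' : List α, x = u'.map some ++ none :: v'.map some ∧
      (∀ i < u'.length, u'.getD i default = w i) ∧ n₀ ≤ u'.length ∧
      (∀ i < v'.length, v'.getD i default = w (u'.length + i)) ∧
      q₀ ∣ v'.length ∧ v' ≠ [] := by
  classical
  have hacc : x ∈ (M w n₀ q₀ hq).accepts ↔
      (M w n₀ q₀ hq).evalFrom (M w n₀ q₀ hq).start x ∈ (M w n₀ q₀ hq).accept := Iff.rfl
  by_cases hn : none ∈ x
  · obtain ⟨s, t, rfl, hs⟩ := split_first_none x hn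
    obtain ⟨u', rfl⟩ := no_none_shape s hs
    rw [hacc, start_eq, evalFrom_append, eval1 hq hper]
    simp only [Nat.zero_add]
    by_cases hpre : ∀ i < u'.length, u'.getD i default = w i
    · rw [if_pos (by simpa using hpre)]
      have hstep : (M w n₀ q₀ hq).evalFrom
          (some (Sum.inl ⟨cp n₀ q₀ (u'.length), cp_lt hq _⟩)) (none :: t)
          = (M w n₀ q₀ hq).evalFrom
            ((M w n₀ q₀ hq).step
              (some (Sum.inl ⟨cp n₀ q₀ (u'.length), cp_lt hq _⟩)) none) t := rfl
      rw [hstep]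
      by_cases hge : n₀ ≤ u'.length
      · have hge' : n₀ ≤ cp n₀ q₀ u'.length := cp_ge_iff.mpr hge
        have hval : cp n₀ q₀ u'.length - n₀ = (u'.length - n₀) % q₀ := by
          rw [cp_of_ge hge]; omega
        have hstep2 : (M w n₀ q₀ hq).step
            (some (Sum.inl ⟨cp n₀ q₀ (u'.length), cp_lt hq _⟩)) none
            = some (Sum.inr (⟨(u'.length - n₀) % q₀, Nat.mod_lt _ hq⟩,
                ⟨(u'.length - n₀) % q₀, Nat.mod_lt _ hq⟩, false)) := by
          simp only [M, dif_pos hge']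
          congr 2 <;> simp [hval]
        rw [hstep2, eval2]
        have hwchar : ∀ i, w (n₀ + ((u'.length - n₀) % q₀ + i) % q₀) = w (u'.length + i) := by
          intro i
          rw [mod_add_mod', ← hasPer_add_mod hq hper (u'.length - n₀ + i)]
          congr 1
          omega
        constructor
        · rintro ⟨v', rfl, hchar, hfin, hne⟩
          refine ⟨u', v', rfl, hpre, hge, ?_, ?_, ?_⟩
          · intro i hi
            rw [hchar i hi, hwchar]
          · exact (mod_self_add_iff (Nat.mod_lt _ hq)).mp hfin
          · tauto
        · rintro ⟨u₂, v₂, heq, hpre₂, hge₂, hchar₂, hdvd₂, hne₂⟩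
          obtain ⟨hu, ht⟩ := uniq_split _ _ _ _ heq hs (by simp)
          have : u₂ = u' := List.map_injective_iff.mpr (fun _ _ => Option.some.inj) hu.symm
          subst this
          subst ht
          refine ⟨v₂, rfl, ?_, ?_, Or.inr hne₂⟩
          · intro i hi
            rw [hwchar]
            exact hchar₂ i (by simpa using hi)
          · exact (mod_self_add_iff (Nat.mod_lt _ hq)).mpr (by simpa using hdvd₂)
      · have hge' : ¬ n₀ ≤ cp n₀ q₀ u'.length := fun hc => hge (cp_ge_iff.mp hc)
        have hstep2 : (M w n₀ q₀ hq).step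
            (some (Sum.inl ⟨cp n₀ q₀ (u'.length), cp_lt hq _⟩)) none = none := by
          simp only [M, dif_neg hge']
        rw [hstep2, eval_dead]
        constructor
        · rintro ⟨r, hr⟩; cases hr
        · rintro ⟨u₂, v₂, heq, hpre₂, hge₂, -⟩
          exfalso
          obtain ⟨hu, -⟩ := uniq_split _ _ _ _ heq hs (by simp)
          have : u₂ = u' := List.map_injective_iff.mpr (fun _ _ => Option.some.inj) hu.symm
          exact hge (this ▸ hge₂)
    · rw [if_neg (by simpa using hpre), eval_dead]
      constructor
      · rintro ⟨r, hr⟩; cases hr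
      · rintro ⟨u₂, v₂, heq, hpre₂, -⟩
        exfalso
        obtain ⟨hu, -⟩ := uniq_split _ _ _ _ heq hs (by simp)
        have : u₂ = u' := List.map_injective_iff.mpr (fun _ _ => Option.some.inj) hu.symm
        exact hpre (this ▸ hpre₂)
  · constructor
    · intro hx
      exfalso
      obtain ⟨x', rfl⟩ := no_none_shape x hn
      rw [hacc, start_eq, eval1 hq hper] at hx
      split at hx
      · rcases hx with ⟨r, hr⟩; cases hr
      · rcases hx with ⟨r, hr⟩; cases hr
    · rintro ⟨u₂, v₂, rfl, -⟩
      exact absurd (by simp : (none : Option α) ∈ _) hn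

end dfa

end S10

/-- There is a DFA with `O(|v|·(|u|+|v|))` states over `Σ ∪ {$}` (here `$` is
encoded as `none`) recognizing exactly the encodings `u' $ v'` of the
decompositions of the ω-word `u v^ω`. -/
theorem stmt_10 {α : Type} [Fintype α] [Inhabited α] :
    ∃ c : ℕ, ∀ u v : List α, v ≠ [] →
      ∃ (σ : Type) (inst : Fintype σ) (D : DFA (Option α) σ),
        @Fintype.card σ inst ≤ c * (v.length * (u.length + v.length)) ∧
        D.accepts = { w : List (Option α) | ∃ u' v' : List α, v' ≠ [] ∧
          w = u'.map some ++ none :: v'.map some ∧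
          upw u' v' = upw u v } := by
  classical
  refine ⟨4, ?_⟩
  intro u v hv
  have hvpos : 0 < v.length := List.length_pos_iff.mpr hv
  have hbase : S10.HasPer (upw u v) u.length v.length := S10.upw_per u v
  have hPex : ∃ p, 0 < p ∧ ∃ n, S10.HasPer (upw u v) n p :=
    ⟨v.length, hvpos, u.length, hbase⟩
  obtain ⟨hqpos, m, hm⟩ := Nat.find_spec hPex
  set q₀ := Nat.find hPex with hq₀def
  have hq_min : ∀ p, 0 < p → (∃ n, S10.HasPer (upw u v) n p) → q₀ ≤ p := fun p h1 h2 =>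
    Nat.find_min' hPex ⟨h1, h2⟩
  have hq_le : q₀ ≤ v.length := hq_min _ hvpos ⟨_, hbase⟩
  have hul : S10.HasPer (upw u v) u.length q₀ := S10.hasPer_anywhere hvpos hbase hm
  have hNex : ∃ n, S10.HasPer (upw u v) n q₀ := ⟨u.length, hul⟩
  set n₀ := Nat.find hNex with hn₀def
  have hn : S10.HasPer (upw u v) n₀ q₀ := Nat.find_spec hNex
  have hn_le : n₀ ≤ u.length := Nat.find_min' hNex hul
  have hn_min : ∀ n, S10.HasPer (upw u v) n q₀ → n₀ ≤ n := fun n h => Nat.find_min' hNex h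
  refine ⟨S10.St n₀ q₀, inferInstance, S10.M (upw u v) n₀ q₀ hqpos, ?_, ?_⟩
  · rw [S10.card_St]
    have h1 : q₀ * q₀ ≤ v.length * v.length := Nat.mul_le_mul hq_le hq_le
    have h2 : v.length * (u.length + v.length)
        = v.length * u.length + v.length * v.length := Nat.mul_add _ _ _
    have h3 : u.length ≤ v.length * u.length := Nat.le_mul_of_pos_left _ hvpos
    have h4 : v.length ≤ v.length * v.length := Nat.le_mul_of_pos_left _ hvpos
    nlinarith
  · ext x
    rw [S10.accepts_iff hqpos hn x]
    constructor
    · rintro ⟨u', v', hx, hpre, hge, hfac, hdvd, hne⟩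
      exact ⟨u', v', hne, hx,
        (S10.decomp_iff u v hv hqpos hn hq_min hn_min u' v' hne).mpr ⟨hpre, hge, hfac, hdvd⟩⟩
    · rintro ⟨u', v', hne, hx, hupw⟩
      obtain ⟨hpre, hge, hfac, hdvd⟩ :=
        (S10.decomp_iff u v hv hqpos hn hq_min hn_min u' v' hne).mp hupw
      exact ⟨u', v', hx, hpre, hge, hfac, hdvd, hne⟩
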